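/- Let A₁, A₂, …, A_k (k ≥ 2) be stable matching instances on the same n workers and n firms such that every worker has the same preference order in all of them. Then the set L' = M_{A_1} ∩ M_{A_2} ∩ … ∩ M_{A_k} is closed under the join and meet operations of each lattice L_{A_i} (these operations coincide across the instances), and if L' is nonempty it contains a worker-optimal matching (weakly preferred by every worker to every matching in L') and a worker-pessimal matching (to which every worker weakly prefers every matching in L'). -/

import Mathlib

/-- A stable matching instance on `n` workers and `n` firms: each worker `w` has a strict
total preference order over firms encoded by an injective rank function `wRank w`
(lower rank = more preferred), and each firm `f` has one over workers (`fRank f`). -/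
structure SMInstance (n : ℕ) where
  wRank : Fin n → Fin n → Fin n
  fRank : Fin n → Fin n → Fin n
  wRank_inj : ∀ w, Function.Injective (wRank w)
  fRank_inj : ∀ f, Function.Injective (fRank f)

/-- `(w, f)` is a blocking pair of the matching `M` under instance `I`:
`M w ≠ f`, `w` strictly prefers `f` to `M w`, and `f` strictly prefers `w`
to its `M`-partner (the worker `w'` with `M w' = f`). -/
def Blocking {n : ℕ} (I : SMInstance n) (M : Fin n → Fin n) (w f : Fin n) : Prop :=
  M w ≠ f ∧ I.wRank w f < I.wRank w (M w) ∧
    ∃ w', M w' = f ∧ I.fRank f w < I.fRank f w'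

/-- A matching (bijection) is stable under `I` if it has no blocking pair. -/
def IsStable {n : ℕ} (I : SMInstance n) (M : Fin n → Fin n) : Prop :=
  Function.Bijective M ∧ ∀ w f, ¬ Blocking I M w f

/-- The join `M₁ ∨_I M₂`: each worker gets its less preferred partner. -/
def joinMap {n : ℕ} (I : SMInstance n) (M₁ M₂ : Fin n → Fin n) : Fin n → Fin n :=
  fun w => if I.wRank w (M₁ w) < I.wRank w (M₂ w) then M₂ w else M₁ w

/-- The meet `M₁ ∧_I M₂`: each worker gets its more preferred partner. -/
def meetMap {n : ℕ} (I : SMInstance n) (M₁ M₂ : Fin n → Fin n) : Fin n → Fin n :=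
  fun w => if I.wRank w (M₁ w) < I.wRank w (M₂ w) then M₁ w else M₂ w

section Aux

variable {n : ℕ}

/-- If `w` weakly prefers `f` to `g` and `f ≠ g`, the preference is strict. -/
lemma rank_lt_of_le (I : SMInstance n) (w : Fin n) {f g : Fin n}
    (h : I.wRank w f ≤ I.wRank w g) (hne : f ≠ g) : I.wRank w f < I.wRank w g :=
  h.lt_of_ne fun e => hne (I.wRank_inj w e)

/-- Basic stability consequence: if worker `a` strictly prefers `f` to its `M`-partner,
then `f` strictly prefers its `M`-partner `b` to `a`. -/
lemma lemB (I : SMInstance n) {M : Fin n → Fin n} (hM : IsStable I M) {a b f : Fin n}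
    (hna : M a ≠ f) (hpref : I.wRank a f < I.wRank a (M a)) (hb : M b = f) :
    I.fRank f b < I.fRank f a := by
  have hne : b ≠ a := fun e => hna (e ▸ hb)
  have h1 : ¬ I.fRank f a < I.fRank f b := fun hlt => hM.2 a f ⟨hna, hpref, b, hb, hlt⟩
  exact (not_lt.mp h1).lt_of_ne fun e => hne (I.fRank_inj f e)

lemma mj_cases (I : SMInstance n) (M₁ M₂ : Fin n → Fin n) (w : Fin n) :
    (meetMap I M₁ M₂ w = M₁ w ∧ joinMap I M₁ M₂ w = M₂ w) ∨
    (meetMap I M₁ M₂ w = M₂ w ∧ joinMap I M₁ M₂ w = M₁ w) := by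
  by_cases h : I.wRank w (M₁ w) < I.wRank w (M₂ w) <;> simp [meetMap, joinMap, h]

lemma meet_le_left (I : SMInstance n) (M₁ M₂ : Fin n → Fin n) (w : Fin n) :
    I.wRank w (meetMap I M₁ M₂ w) ≤ I.wRank w (M₁ w) := by
  by_cases h : I.wRank w (M₁ w) < I.wRank w (M₂ w) <;> simp [meetMap, h]
  exact not_lt.mp h

lemma meet_le_right (I : SMInstance n) (M₁ M₂ : Fin n → Fin n) (w : Fin n) :
    I.wRank w (meetMap I M₁ M₂ w) ≤ I.wRank w (M₂ w) := by
  by_cases h : I.wRank w (M₁ w) < I.wRank w (M₂ w) <;> simp [meetMap, h]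
  exact le_of_lt h

lemma left_le_join (I : SMInstance n) (M₁ M₂ : Fin n → Fin n) (w : Fin n) :
    I.wRank w (M₁ w) ≤ I.wRank w (joinMap I M₁ M₂ w) := by
  by_cases h : I.wRank w (M₁ w) < I.wRank w (M₂ w) <;> simp [joinMap, h]
  exact le_of_lt h

lemma right_le_join (I : SMInstance n) (M₁ M₂ : Fin n → Fin n) (w : Fin n) :
    I.wRank w (M₂ w) ≤ I.wRank w (joinMap I M₁ M₂ w) := by
  by_cases h : I.wRank w (M₁ w) < I.wRank w (M₂ w) <;> simp [joinMap, h]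
  exact not_lt.mp h

lemma joinMap_comm (I : SMInstance n) (M₁ M₂ : Fin n → Fin n) :
    joinMap I M₁ M₂ = joinMap I M₂ M₁ := by
  funext w
  unfold joinMap
  rcases lt_trichotomy (I.wRank w (M₁ w)) (I.wRank w (M₂ w)) with h | h | h
  · rw [if_pos h, if_neg (asymm h)]
  · have he : M₁ w = M₂ w := I.wRank_inj w h
    simp [he]
  · rw [if_neg (asymm h), if_pos h]

lemma joinMap_congr {I I' : SMInstance n} (h : I.wRank = I'.wRank) (M₁ M₂ : Fin n → Fin n) :
    joinMap I M₁ M₂ = joinMap I' M₁ M₂ := by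
  unfold joinMap; rw [h]

lemma meetMap_congr {I I' : SMInstance n} (h : I.wRank = I'.wRank) (M₁ M₂ : Fin n → Fin n) :
    meetMap I M₁ M₂ = meetMap I' M₁ M₂ := by
  unfold meetMap; rw [h]

lemma meet_core (I : SMInstance n) {M₁ M₂ : Fin n → Fin n}
    (h₁ : IsStable I M₁) (h₂ : IsStable I M₂) {w w' f : Fin n}
    (hww' : w ≠ w') (h2w : M₂ w = f) (h1w' : M₁ w' = f)
    (hle : I.wRank w f ≤ I.wRank w (M₁ w)) (hle' : I.wRank w' f ≤ I.wRank w' (M₂ w')) :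
    False := by
  have hM1w : M₁ w ≠ f := fun e => hww' (h₁.1.1 (e.trans h1w'.symm))
  have hM2w' : M₂ w' ≠ f := fun e => hww' (h₂.1.1 (h2w.trans e.symm))
  have hs : I.wRank w f < I.wRank w (M₁ w) := rank_lt_of_le I w hle fun e => hM1w e.symm
  have hs' : I.wRank w' f < I.wRank w' (M₂ w') := rank_lt_of_le I w' hle' fun e => hM2w' e.symm
  exact absurd (lemB I h₁ hM1w hs h1w') (asymm (lemB I h₂ hM2w' hs' h2w))

lemma meet_inj (I : SMInstance n) {M₁ M₂ : Fin n → Fin n}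
    (h₁ : IsStable I M₁) (h₂ : IsStable I M₂) :
    Function.Injective (meetMap I M₁ M₂) := by
  intro w w' he
  by_contra hne
  have hle1 : I.wRank w (meetMap I M₁ M₂ w) ≤ I.wRank w (M₁ w) := meet_le_left I M₁ M₂ w
  have hle2 : I.wRank w (meetMap I M₁ M₂ w) ≤ I.wRank w (M₂ w) := meet_le_right I M₁ M₂ w
  have hle1' : I.wRank w' (meetMap I M₁ M₂ w) ≤ I.wRank w' (M₁ w') := by
    rw [he]; exact meet_le_left I M₁ M₂ w'
  have hle2' : I.wRank w' (meetMap I M₁ M₂ w) ≤ I.wRank w' (M₂ w') := by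
    rw [he]; exact meet_le_right I M₁ M₂ w'
  rcases mj_cases I M₁ M₂ w with ⟨hm, _⟩ | ⟨hm, _⟩ <;>
    rcases mj_cases I M₁ M₂ w' with ⟨hm', _⟩ | ⟨hm', _⟩
  · exact hne (h₁.1.1 (hm.symm.trans (he.trans hm')))
  · -- meet w = M₁ w, meet w' = M₂ w'
    exact meet_core I h₂ h₁ hne hm.symm (hm'.symm.trans he.symm)
      hle2 hle1'
  · -- meet w = M₂ w, meet w' = M₁ w'
    exact meet_core I h₁ h₂ hne hm.symm (hm'.symm.trans he.symm)
      hle1 hle2'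
  · exact hne (h₂.1.1 (hm.symm.trans (he.trans hm')))

lemma meet_nb (I : SMInstance n) {M₁ M₂ : Fin n → Fin n}
    (h₁ : IsStable I M₁) (h₂ : IsStable I M₂) :
    ∀ w f, ¬ Blocking I (meetMap I M₁ M₂) w f := by
  intro w f hb
  obtain ⟨hne, hpref, w', hmw', hfr⟩ := hb
  have hp1 : I.wRank w f < I.wRank w (M₁ w) := lt_of_lt_of_le hpref (meet_le_left I M₁ M₂ w)
  have hp2 : I.wRank w f < I.wRank w (M₂ w) := lt_of_lt_of_le hpref (meet_le_right I M₁ M₂ w)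
  have hne1 : M₁ w ≠ f := by intro e; rw [e] at hp1; exact lt_irrefl _ hp1
  have hne2 : M₂ w ≠ f := by intro e; rw [e] at hp2; exact lt_irrefl _ hp2
  rcases mj_cases I M₁ M₂ w' with ⟨hm', _⟩ | ⟨hm', _⟩
  · exact h₁.2 w f ⟨hne1, hp1, w', hm'.symm.trans hmw', hfr⟩
  · exact h₂.2 w f ⟨hne2, hp2, w', hm'.symm.trans hmw', hfr⟩

lemma meet_stable (I : SMInstance n) {M₁ M₂ : Fin n → Fin n}
    (h₁ : IsStable I M₁) (h₂ : IsStable I M₂) :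
    IsStable I (meetMap I M₁ M₂) :=
  ⟨Finite.injective_iff_bijective.mp (meet_inj I h₁ h₂), meet_nb I h₁ h₂⟩

lemma join_bij (I : SMInstance n) {M₁ M₂ : Fin n → Fin n}
    (h₁ : IsStable I M₁) (h₂ : IsStable I M₂) :
    Function.Bijective (joinMap I M₁ M₂) := by
  rw [← Finite.surjective_iff_bijective]
  intro f
  obtain ⟨w₁, h1⟩ := h₁.1.2 f
  obtain ⟨w₂, h2⟩ := h₂.1.2 f
  by_cases e1 : joinMap I M₁ M₂ w₁ = f
  · exact ⟨w₁, e1⟩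
  by_cases e2 : joinMap I M₁ M₂ w₂ = f
  · exact ⟨w₂, e2⟩
  exfalso
  rcases mj_cases I M₁ M₂ w₁ with ⟨hm1, hj1⟩ | ⟨hm1, hj1⟩
  · rcases mj_cases I M₁ M₂ w₂ with ⟨hm2, hj2⟩ | ⟨hm2, hj2⟩
    · exact e2 (hj2.trans h2)
    · have hww : w₁ = w₂ := meet_inj I h₁ h₂ (by rw [hm1, h1, hm2, h2])
      exact e2 (by rw [hj2, ← hww, h1])
  · exact e1 (hj1.trans h1)

lemma claim_aux (I : SMInstance n) {M₁ M₂ : Fin n → Fin n} (h₁ : IsStable I M₁)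
    (hinj : Function.Injective (joinMap I M₁ M₂)) {w' f u : Fin n}
    (hj : joinMap I M₁ M₂ w' = f) (h1 : M₁ w' = f) (hu : M₂ u = f) :
    I.fRank f w' ≤ I.fRank f u := by
  rcases le_or_gt (I.fRank f w') (I.fRank f u) with h | h
  · exact h
  exfalso
  have huw : u ≠ w' := fun e => lt_irrefl _ (e ▸ h)
  have hM1u : M₁ u ≠ f := fun e => huw (h₁.1.1 (e.trans h1.symm))
  have hnb : ¬ I.wRank u f < I.wRank u (M₁ u) := fun hp => asymm h (lemB I h₁ hM1u hp h1)
  have h3 : I.wRank u (M₁ u) < I.wRank u f :=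
    (not_lt.mp hnb).lt_of_ne fun e => hM1u (I.wRank_inj u e)
  have hju : joinMap I M₁ M₂ u = f := by
    unfold joinMap
    rw [hu, if_pos h3]
  exact huw (hinj (hju.trans hj.symm))

lemma join_nb (I : SMInstance n) {M₁ M₂ : Fin n → Fin n}
    (h₁ : IsStable I M₁) (h₂ : IsStable I M₂) :
    ∀ w f, ¬ Blocking I (joinMap I M₁ M₂) w f := by
  intro w f hb
  obtain ⟨hne, hpref, w', hjw', hfr⟩ := hb
  have hinj : Function.Injective (joinMap I M₁ M₂) := (join_bij I h₁ h₂).1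
  have hinj' : Function.Injective (joinMap I M₂ M₁) := by
    rw [joinMap_comm I M₂ M₁]; exact hinj
  have claim : ∀ u, (M₁ u = f → I.fRank f w < I.fRank f u) ∧
      (M₂ u = f → I.fRank f w < I.fRank f u) := by
    intro u
    rcases mj_cases I M₁ M₂ w' with ⟨hm', hj'⟩ | ⟨hm', hj'⟩
    · -- join w' = M₂ w' = f
      have h2' : M₂ w' = f := hj'.symm.trans hjw'
      constructor
      · intro hu
        have hjw'' : joinMap I M₂ M₁ w' = f := by
          rw [joinMap_comm I M₂ M₁]; exact hjw'
        exact lt_of_lt_of_le hfr (claim_aux I h₂ hinj' hjw'' h2' hu)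
      · intro hu
        have hw : w' = u := h₂.1.1 (h2'.trans hu.symm)
        exact hw ▸ hfr
    · have h1' : M₁ w' = f := hj'.symm.trans hjw'
      constructor
      · intro hu
        have hw : w' = u := h₁.1.1 (h1'.trans hu.symm)
        exact hw ▸ hfr
      · intro hu
        exact lt_of_lt_of_le hfr (claim_aux I h₁ hinj hjw' h1' hu)
  obtain ⟨u₁, hu1⟩ := h₁.1.2 f
  obtain ⟨u₂, hu2⟩ := h₂.1.2 f
  rcases mj_cases I M₁ M₂ w with ⟨hm, hj⟩ | ⟨hm, hj⟩
  · -- join w = M₂ w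
    refine h₂.2 w f ⟨?_, ?_, u₂, hu2, (claim u₂).2 hu2⟩
    · rw [← hj]; exact hne
    · rw [← hj]; exact hpref
  · refine h₁.2 w f ⟨?_, ?_, u₁, hu1, (claim u₁).1 hu1⟩
    · rw [← hj]; exact hne
    · rw [← hj]; exact hpref

lemma join_stable (I : SMInstance n) {M₁ M₂ : Fin n → Fin n}
    (h₁ : IsStable I M₁) (h₂ : IsStable I M₂) :
    IsStable I (joinMap I M₁ M₂) :=
  ⟨join_bij I h₁ h₂, join_nb I h₁ h₂⟩

lemma foldr_meet_spec (I : SMInstance n) (P : (Fin n → Fin n) → Prop)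
    (cl : ∀ M₁ M₂, P M₁ → P M₂ → P (meetMap I M₁ M₂)) :
    ∀ (l : List (Fin n → Fin n)) (M₀ : Fin n → Fin n), P M₀ → (∀ m ∈ l, P m) →
      P (l.foldr (meetMap I) M₀) ∧
      ∀ m, (m ∈ l ∨ m = M₀) → ∀ w,
        I.wRank w (l.foldr (meetMap I) M₀ w) ≤ I.wRank w (m w) := by
  intro l
  induction l with
  | nil =>
    intro M₀ h0 _
    refine ⟨h0, ?_⟩
    rintro m (h | rfl) w
    · cases h
    · exact le_refl _
  | cons a l ih =>
    intro M₀ h0 hl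
    obtain ⟨ih1, ih2⟩ := ih M₀ h0 fun m hm => hl m (List.mem_cons_of_mem _ hm)
    have hfold : (a :: l).foldr (meetMap I) M₀ = meetMap I a (l.foldr (meetMap I) M₀) := rfl
    rw [hfold]
    refine ⟨cl _ _ (hl a (List.mem_cons_self (a := a) (l := l))) ih1, ?_⟩
    intro m hm w
    have base : I.wRank w (meetMap I a (l.foldr (meetMap I) M₀) w) ≤
        I.wRank w (l.foldr (meetMap I) M₀ w) := meet_le_right I _ _ w
    rcases hm with hm | rfl
    · rcases List.mem_cons.mp hm with rfl | hm
      · exact meet_le_left I _ _ w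
      · exact le_trans base (ih2 m (Or.inl hm) w)
    · exact le_trans base (ih2 m (Or.inr rfl) w)

lemma foldr_join_spec (I : SMInstance n) (P : (Fin n → Fin n) → Prop)
    (cl : ∀ M₁ M₂, P M₁ → P M₂ → P (joinMap I M₁ M₂)) :
    ∀ (l : List (Fin n → Fin n)) (M₀ : Fin n → Fin n), P M₀ → (∀ m ∈ l, P m) →
      P (l.foldr (joinMap I) M₀) ∧
      ∀ m, (m ∈ l ∨ m = M₀) → ∀ w,
        I.wRank w (m w) ≤ I.wRank w (l.foldr (joinMap I) M₀ w) := by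
  intro l
  induction l with
  | nil =>
    intro M₀ h0 _
    refine ⟨h0, ?_⟩
    rintro m (h | rfl) w
    · cases h
    · exact le_refl _
  | cons a l ih =>
    intro M₀ h0 hl
    obtain ⟨ih1, ih2⟩ := ih M₀ h0 fun m hm => hl m (List.mem_cons_of_mem _ hm)
    have hfold : (a :: l).foldr (joinMap I) M₀ = joinMap I a (l.foldr (joinMap I) M₀) := rfl
    rw [hfold]
    refine ⟨cl _ _ (hl a (List.mem_cons_self (a := a) (l := l))) ih1, ?_⟩
    intro m hm w
    have base : I.wRank w (l.foldr (joinMap I) M₀ w) ≤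
        I.wRank w (joinMap I a (l.foldr (joinMap I) M₀) w) := right_le_join I _ _ w
    rcases hm with hm | rfl
    · rcases List.mem_cons.mp hm with rfl | hm
      · exact left_le_join I _ _ w
      · exact le_trans (ih2 m (Or.inl hm) w) base
    · exact le_trans (ih2 m (Or.inr rfl) w) base

end Aux

/-- for k ≥ 2 instances with identical worker preferences,
the intersection of their sets of stable matchings is closed under the join and
meet of each lattice (and these operations coincide across instances); and if the
intersection is nonempty it has worker-optimal and worker-pessimal matchings. -/
theorem stmt6 {n k : ℕ} (hn : 1 ≤ n) (hk : 2 ≤ k) (A : Fin k → SMInstance n)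
    (hW : ∀ i j : Fin k, (A i).wRank = (A j).wRank) :
    (∀ M₁ M₂ : Fin n → Fin n,
      (∀ i, IsStable (A i) M₁) → (∀ i, IsStable (A i) M₂) →
        (∀ i j, joinMap (A i) M₁ M₂ = joinMap (A j) M₁ M₂ ∧
                meetMap (A i) M₁ M₂ = meetMap (A j) M₁ M₂) ∧
        (∀ i j, IsStable (A i) (joinMap (A j) M₁ M₂) ∧
                IsStable (A i) (meetMap (A j) M₁ M₂))) ∧
    ((∃ M, ∀ i, IsStable (A i) M) →
      (∃ Mtop, (∀ i, IsStable (A i) Mtop) ∧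
        ∀ M, (∀ i, IsStable (A i) M) → ∀ (w : Fin n),
          (A ⟨0, by omega⟩).wRank w (Mtop w) ≤ (A ⟨0, by omega⟩).wRank w (M w)) ∧
      (∃ Mbot, (∀ i, IsStable (A i) Mbot) ∧
        ∀ M, (∀ i, IsStable (A i) M) → ∀ (w : Fin n),
          (A ⟨0, by omega⟩).wRank w (M w) ≤ (A ⟨0, by omega⟩).wRank w (Mbot w))) := by
  constructor
  · intro M₁ M₂ hM₁ hM₂
    constructor
    · intro i j
      exact ⟨joinMap_congr (hW i j) M₁ M₂, meetMap_congr (hW i j) M₁ M₂⟩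
    · intro i j
      constructor
      · rw [joinMap_congr (hW j i) M₁ M₂]
        exact join_stable (A i) (hM₁ i) (hM₂ i)
      · rw [meetMap_congr (hW j i) M₁ M₂]
        exact meet_stable (A i) (hM₁ i) (hM₂ i)
  · rintro ⟨M₀, hM₀⟩
    classical
    set i₀ : Fin k := ⟨0, by omega⟩ with hi₀
    set P : (Fin n → Fin n) → Prop := fun M => ∀ i, IsStable (A i) M with hP
    have clm : ∀ M₁ M₂, P M₁ → P M₂ → P (meetMap (A i₀) M₁ M₂) := by
      intro M₁ M₂ h1 h2 i
      rw [meetMap_congr (hW i₀ i) M₁ M₂]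
      exact meet_stable (A i) (h1 i) (h2 i)
    have clj : ∀ M₁ M₂, P M₁ → P M₂ → P (joinMap (A i₀) M₁ M₂) := by
      intro M₁ M₂ h1 h2 i
      rw [joinMap_congr (hW i₀ i) M₁ M₂]
      exact join_stable (A i) (h1 i) (h2 i)
    set l : List (Fin n → Fin n) := (Finset.univ.filter P).toList with hl
    have hmem : ∀ M, P M → M ∈ l := by
      intro M hM
      rw [hl, Finset.mem_toList, Finset.mem_filter]
      exact ⟨Finset.mem_univ M, hM⟩
    have hall : ∀ m ∈ l, P m := by
      intro m hm
      rw [hl, Finset.mem_toList, Finset.mem_filter] at hm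
      exact hm.2
    obtain ⟨ht1, ht2⟩ := foldr_meet_spec (A i₀) P clm l M₀ hM₀ hall
    obtain ⟨hb1, hb2⟩ := foldr_join_spec (A i₀) P clj l M₀ hM₀ hall
    constructor
    · exact ⟨_, ht1, fun M hM w => ht2 M (Or.inl (hmem M hM)) w⟩
    · exact ⟨_, hb1, fun M hM w => hb2 M (Or.inl (hmem M hM)) w⟩
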